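/- Let M be a matroid on a finite ground set E, and let F ⊊ G be flats of M. Let k be an integer with 1 ≤ k ≤ rk(G) − rk(F). Then the following identity holds in ℝ^E: Σ_{F = F^(0) ⋖ F^(1) ⋖ ⋯ ⋖ F^(k), F^(k) ⊆ G} (e_{F^(k)} − e_{F^(k−1)}) + Σ_{l=1}^{k−1} (−1)^{k−l} · Σ_{F = F^(0) ⋖ ⋯ ⋖ F^(l), F^(l) ⊆ G} (e_G − e_{F^(l−1)}) + (−1)^k · (e_G − e_F) = 0, where each inner sum ranges over all chains F = F^(0) ⋖ F^(1) ⋖ ⋯ ⋖ F^(l) of flats of M such that each consecutive pair is a cover relation and F^(l) ⊆ G. (This is the (i,k)-balancing condition of Theorem 3.1, stated for the consecutive flats F = F_i and G = F_{i+1} of a flag.) -/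

import Mathlib

open scoped BigOperators

/-- The `0-1` indicator vector `e_F ∈ ℝ^E` of a subset `F ⊆ E`. -/
noncomputable def eVec {α : Type*} (F : Set α) : α → ℝ := F.indicator 1

set_option linter.unusedSectionVars false

/-- The rank of a set `X` in a matroid `M`: the largest cardinality of an
independent subset of `X`. -/
noncomputable def mrk {α : Type*} (M : Matroid α) (X : Set α) : ℕ :=
  sSup {n : ℕ | ∃ I, M.Indep I ∧ I ⊆ X ∧ I.ncard = n}

/-- `F'` covers `F` in the lattice of flats of `M`: both are flats, `F ⊊ F'`,
and there is no flat strictly between them. -/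
def MCov {α : Type*} (M : Matroid α) (F F' : Set α) : Prop :=
  M.IsFlat F ∧ M.IsFlat F' ∧ F ⊂ F' ∧ ¬ ∃ F'', M.IsFlat F'' ∧ F ⊂ F'' ∧ F'' ⊂ F'

/-- A chain `F = F⁽⁰⁾ ⋖ F⁽¹⁾ ⋖ ⋯ ⋖ F⁽ˡ⁾` of flats of `M` with `F⁽ˡ⁾ ⊆ G`. -/
def IsCovChain {α : Type*} (M : Matroid α) (F G : Set α) (l : ℕ)
    (c : Fin (l + 1) → Set α) : Prop :=
  c 0 = F ∧ (∀ j : Fin l, MCov M (c j.castSucc) (c j.succ)) ∧ c (Fin.last l) ⊆ G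

namespace BalanceAux

open Set Matroid

variable {α : Type*} [Fintype α] {M : Matroid α} {F F' G X I J : Set α} {x : α}

lemma closure_flat' (M : Matroid α) (X : Set α) : M.IsFlat (M.closure X) := by
  haveI : Nonempty {F : Set α // F ∈ {F | M.IsFlat F ∧ X ∩ M.E ⊆ F}} :=
    ⟨⟨M.E, M.ground_isFlat, inter_subset_right⟩⟩
  rw [Matroid.closure_def, sInter_eq_iInter]
  exact Matroid.IsFlat.iInter (fun F => F.2.1)

lemma subset_ground' (hE : M.E = Set.univ) (X : Set α) : X ⊆ M.E := by
  rw [hE]; exact subset_univ X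

lemma mrk_bddAbove (M : Matroid α) (X : Set α) :
    BddAbove {n : ℕ | ∃ I, M.Indep I ∧ I ⊆ X ∧ I.ncard = n} := by
  refine ⟨Fintype.card α, ?_⟩
  rintro n ⟨I, -, -, rfl⟩
  calc I.ncard ≤ (Set.univ : Set α).ncard := Set.ncard_le_ncard (subset_univ I) finite_univ
    _ = Fintype.card α := by rw [Set.ncard_univ, Nat.card_eq_fintype_card]

lemma le_mrk (hI : M.Indep I) (hIX : I ⊆ X) : I.ncard ≤ mrk M X :=
  le_csSup (mrk_bddAbove M X) ⟨I, hI, hIX, rfl⟩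

lemma exists_mrk (M : Matroid α) (X : Set α) :
    ∃ I, M.Indep I ∧ I ⊆ X ∧ I.ncard = mrk M X := by
  have h0 : (0 : ℕ) ∈ {n : ℕ | ∃ I, M.Indep I ∧ I ⊆ X ∧ I.ncard = n} :=
    ⟨∅, M.empty_indep, empty_subset X, by simp⟩
  exact Nat.sSup_mem ⟨0, h0⟩ (mrk_bddAbove M X)

lemma spans_of_max (hE : M.E = Set.univ) (hI : M.Indep I) (hIX : I ⊆ X)
    (hcard : I.ncard = mrk M X) : X ⊆ M.closure I := by
  intro y hy
  by_contra hyc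
  have hyI : y ∉ I := fun h => hyc (M.subset_closure I (subset_ground' hE I) h)
  have hind : M.Indep (insert y I) :=
    (hI.insert_indep_iff_of_notMem hyI).mpr ⟨by rw [hE]; trivial, hyc⟩
  have hle := le_mrk hind (insert_subset hy hIX)
  rw [Set.ncard_insert_of_notMem hyI (Set.toFinite I)] at hle
  omega

lemma closure_max_eq (hE : M.E = Set.univ) (hF : M.IsFlat F) (hI : M.Indep I)
    (hIF : I ⊆ F) (hcard : I.ncard = mrk M F) : M.closure I = F :=
  subset_antisymm (by rw [← hF.closure]; exact M.closure_subset_closure hIF)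
    (spans_of_max hE hI hIF hcard)

lemma mrk_lt_of_flat_ssubset (hE : M.E = Set.univ) (hF : M.IsFlat F) (hFG : F ⊂ G) :
    mrk M F < mrk M G := by
  obtain ⟨I, hI, hIF, hcard⟩ := exists_mrk M F
  obtain ⟨y, hyG, hyF⟩ := exists_of_ssubset hFG
  have hclI : M.closure I = F := closure_max_eq hE hF hI hIF hcard
  have hyI : y ∉ M.closure I := by rw [hclI]; exact hyF
  have hyI' : y ∉ I := fun h => hyI (M.subset_closure I (subset_ground' hE I) h)
  have hind : M.Indep (insert y I) :=
    (hI.insert_indep_iff_of_notMem hyI').mpr ⟨by rw [hE]; trivial, hyI⟩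
  have hle := le_mrk hind (insert_subset hyG (hIF.trans hFG.subset))
  rw [Set.ncard_insert_of_notMem hyI' (Set.toFinite I)] at hle
  omega

lemma ncard_le_of_indep_of_basis (hE : M.E = Set.univ) (hJ : M.Indep J) (hJX : J ⊆ X)
    (hI : M.IsBasis I X) : J.ncard ≤ I.ncard := by
  obtain ⟨J', hJ', hJJ'⟩ := hJ.subset_isBasis_of_subset hJX (subset_ground' hE X)
  have h1 : J.encard ≤ J'.encard := Set.encard_le_encard hJJ'
  have h2 : J'.encard = I.encard :=
    (M ↾ X).isBase_exchange.encard_isBase_eq hJ'.isBase_restrict hI.isBase_restrict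
  have h3 := h1.trans_eq h2
  rwa [← (Set.toFinite J).cast_ncard_eq, ← (Set.toFinite I).cast_ncard_eq,
    Nat.cast_le] at h3

lemma mrk_closure_insert_le (hE : M.E = Set.univ) (hF : M.IsFlat F) (x : α) :
    mrk M (M.closure (insert x F)) ≤ mrk M F + 1 := by
  obtain ⟨I, hI, hIF, hcard⟩ := exists_mrk M F
  have hclI : M.closure I = F := closure_max_eq hE hF hI hIF hcard
  by_cases hxF : x ∈ F
  · rw [Matroid.closure_insert_eq_of_mem_closure (by rw [hF.closure]; exact hxF), hF.closure]
    omega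
  · have hxI : x ∉ M.closure I := by rw [hclI]; exact hxF
    have hxI' : x ∉ I := fun h => hxI (M.subset_closure I (subset_ground' hE I) h)
    have hind : M.Indep (insert x I) :=
      (hI.insert_indep_iff_of_notMem hxI').mpr ⟨by rw [hE]; trivial, hxI⟩
    have hkey : M.closure (insert x F) = M.closure (insert x I) := by
      rw [← hclI, Matroid.closure_insert_closure_eq_closure_insert]
    have hbasis : M.IsBasis (insert x I) (M.closure (insert x F)) := by
      rw [hkey]; exact hind.isBasis_closure
    obtain ⟨J, hJ, hJsub, hJcard⟩ := exists_mrk M (M.closure (insert x F))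
    have hle := ncard_le_of_indep_of_basis hE hJ hJsub hbasis
    rw [hJcard, Set.ncard_insert_of_notMem hxI' (Set.toFinite I)] at hle
    omega

lemma cov_closure_insert (hE : M.E = Set.univ) (hF : M.IsFlat F) (hx : x ∉ F) :
    MCov M F (M.closure (insert x F)) := by
  have hxmem : x ∈ M.closure (insert x F) :=
    M.subset_closure _ (subset_ground' hE _) (mem_insert x F)
  have hFsub : F ⊆ M.closure (insert x F) :=
    (M.subset_closure F (subset_ground' hE F)).trans
      (M.closure_subset_closure (subset_insert x F))
  have hss : F ⊂ M.closure (insert x F) :=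
    hFsub.ssubset_of_ne (fun hEq => hx (by rw [hEq]; exact hxmem))
  refine ⟨hF, closure_flat' M _, hss, ?_⟩
  rintro ⟨F'', hF'', hFF'', hF''cl⟩
  obtain ⟨y, hyF'', hyF⟩ := exists_of_ssubset hFF''
  have hycl : y ∈ M.closure (insert x F) := hF''cl.subset hyF''
  have hyclF : y ∉ M.closure F := by rw [hF.closure]; exact hyF
  have hxmem' : x ∈ M.closure (insert y F) := Matroid.mem_closure_insert hyclF hycl
  have hsub2 : M.closure (insert y F) ⊆ F'' := by
    rw [← hF''.closure]
    exact M.closure_subset_closure (insert_subset hyF'' hFF''.subset)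
  have hx'' : x ∈ F'' := hsub2 hxmem'
  have : M.closure (insert x F) ⊆ F'' := by
    rw [← hF''.closure]
    exact M.closure_subset_closure (insert_subset hx'' hFF''.subset)
  exact hF''cl.not_subset this

lemma cov_eq_closure_insert (hE : M.E = Set.univ) (h : MCov M F F') (hx : x ∈ F')
    (hxF : x ∉ F) : F' = M.closure (insert x F) := by
  obtain ⟨hF, hF', hss, hno⟩ := h
  have h1 : M.closure (insert x F) ⊆ F' := by
    rw [← hF'.closure]
    exact M.closure_subset_closure (insert_subset hx hss.subset)
  have h2 : F ⊂ M.closure (insert x F) := (cov_closure_insert hE hF hxF).2.2.1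
  by_contra hne
  exact hno ⟨_, closure_flat' M _, h2, h1.ssubset_of_ne (fun hh => hne hh.symm)⟩

lemma mrk_cov (hE : M.E = Set.univ) (h : MCov M F F') : mrk M F' = mrk M F + 1 := by
  obtain ⟨x, hx, hxF⟩ := exists_of_ssubset h.2.2.1
  have h1 : mrk M F < mrk M F' := mrk_lt_of_flat_ssubset hE h.1 h.2.2.1
  have h2 : mrk M F' ≤ mrk M F + 1 := by
    rw [cov_eq_closure_insert hE h hx hxF]
    exact mrk_closure_insert_le hE h.1 x
  omega

/-- The set of covers of `F` inside `G`. -/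
def covSet (M : Matroid α) (F G : Set α) : Set (Set α) := {F' | MCov M F F' ∧ F' ⊆ G}

lemma basic_balance (hE : M.E = Set.univ) (hF : M.IsFlat F) (hG : M.IsFlat G) (hFG : F ⊂ G) :
    ∑ F' ∈ (Set.toFinite (covSet M F G)).toFinset, (eVec F' - eVec F)
      = eVec G - eVec F := by
  funext y
  rw [Finset.sum_apply]
  by_cases hyG : y ∈ G
  · by_cases hyF : y ∈ F
    · have hz : ∀ F' ∈ (Set.toFinite (covSet M F G)).toFinset,
          (eVec F' - eVec F) y = 0 := by
        intro F' hF'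
        rw [Set.Finite.mem_toFinset] at hF'
        have hyF' : y ∈ F' := hF'.1.2.2.1.subset hyF
        simp [eVec, Set.indicator_apply, hyF, hyF']
      rw [Finset.sum_congr rfl hz, Finset.sum_const_zero]
      simp [eVec, Set.indicator_apply, hyF, hyG]
    · have hcov : MCov M F (M.closure (insert y F)) := cov_closure_insert hE hF hyF
      have hF0G : M.closure (insert y F) ⊆ G := by
        rw [← hG.closure]
        exact M.closure_subset_closure (insert_subset hyG hFG.subset)
      have hmem : M.closure (insert y F) ∈ (Set.toFinite (covSet M F G)).toFinset := by
        rw [Set.Finite.mem_toFinset]; exact ⟨hcov, hF0G⟩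
      rw [Finset.sum_eq_single_of_mem _ hmem ?_]
      · have hyF0 : y ∈ M.closure (insert y F) :=
          M.subset_closure _ (subset_ground' hE _) (mem_insert y F)
        simp [eVec, Set.indicator_apply, hyF0, hyF, hyG]
      · intro F' hF' hne
        rw [Set.Finite.mem_toFinset] at hF'
        have hyF' : y ∉ F' := fun hyF' => hne (cov_eq_closure_insert hE hF'.1 hyF' hyF)
        simp [eVec, Set.indicator_apply, hyF', hyF]
  · have hyF : y ∉ F := fun h => hyG (hFG.subset h)
    have hz : ∀ F' ∈ (Set.toFinite (covSet M F G)).toFinset,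
        (eVec F' - eVec F) y = 0 := by
      intro F' hF'
      rw [Set.Finite.mem_toFinset] at hF'
      have hyF' : y ∉ F' := fun h => hyG (hF'.2 h)
      simp [eVec, Set.indicator_apply, hyF', hyF]
    rw [Finset.sum_congr rfl hz, Finset.sum_const_zero]
    simp [eVec, Set.indicator_apply, hyF, hyG]

/-- Finset of chains. -/
noncomputable def chF (M : Matroid α) (F G : Set α) (l : ℕ) :
    Finset (Fin (l + 1) → Set α) :=
  (Set.toFinite {c : Fin (l + 1) → Set α | IsCovChain M F G l c}).toFinset

lemma mem_chF {l : ℕ} {c : Fin (l + 1) → Set α} :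
    c ∈ chF M F G l ↔ IsCovChain M F G l c := by
  rw [chF, Set.Finite.mem_toFinset]; rfl

lemma finsum_chain_eq {l : ℕ} (f : (Fin (l + 1) → Set α) → (α → ℝ)) :
    (∑ᶠ c ∈ {c : Fin (l + 1) → Set α | IsCovChain M F G l c}, f c)
      = ∑ c ∈ chF M F G l, f c :=
  finsum_mem_eq_finite_toFinset_sum f _

lemma chain_flat_mrk (hE : M.E = Set.univ) (hF : M.IsFlat F) {l : ℕ}
    {c : Fin (l + 1) → Set α} (hc : IsCovChain M F G l c) (j : Fin (l + 1)) :
    M.IsFlat (c j) ∧ mrk M (c j) = mrk M F + j.val := by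
  induction j using Fin.induction with
  | zero => rw [hc.1]; exact ⟨hF, rfl⟩
  | succ i ih =>
    have hcov := hc.2.1 i
    refine ⟨hcov.2.1, ?_⟩
    rw [mrk_cov hE hcov, ih.2]
    simp [Fin.val_succ]
    omega

lemma chain_trunc {l : ℕ} {c : Fin (l + 2) → Set α} (hc : IsCovChain M F G (l + 1) c) :
    IsCovChain M F G l (Fin.init c) ∧
      c (Fin.last (l + 1)) ∈ covSet M (Fin.init c (Fin.last l)) G := by
  have hlastcov := hc.2.1 (Fin.last l)
  rw [Fin.succ_last] at hlastcov
  refine ⟨⟨?_, ?_, ?_⟩, ?_, hc.2.2⟩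
  · show c _ = F
    rw [Fin.castSucc_zero]; exact hc.1
  · intro j
    show MCov M (c _) (c _)
    have := hc.2.1 j.castSucc
    rwa [Fin.succ_castSucc] at this
  · exact (hlastcov.2.2.1.subset).trans hc.2.2
  · exact hlastcov

lemma chain_snoc {l : ℕ} {c : Fin (l + 1) → Set α} (hc : IsCovChain M F G l c)
    (hF' : F' ∈ covSet M (c (Fin.last l)) G) :
    IsCovChain M F G (l + 1) (Fin.snoc c F') := by
  refine ⟨?_, ?_, ?_⟩
  · have h0 : (0 : Fin (l + 2)) = Fin.castSucc 0 := rfl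
    rw [h0, Fin.snoc_castSucc]; exact hc.1
  · intro j
    induction j using Fin.lastCases with
    | last =>
      rw [Fin.succ_last, Fin.snoc_last, Fin.snoc_castSucc]
      exact hF'.1
    | cast i =>
      rw [Fin.succ_castSucc, Fin.snoc_castSucc, Fin.snoc_castSucc]
      exact hc.2.1 i
  · rw [Fin.snoc_last]; exact hF'.2

lemma sum_chain_succ (M : Matroid α) (F G : Set α) (l : ℕ)
    (f : (Fin (l + 2) → Set α) → (α → ℝ)) :
    ∑ c ∈ chF M F G (l + 1), f c
      = ∑ c ∈ chF M F G l,
          ∑ F' ∈ (Set.toFinite (covSet M (c (Fin.last l)) G)).toFinset,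
            f (Fin.snoc c F') := by
  rw [← Finset.sum_sigma (chF M F G l)
    (fun c => (Set.toFinite (covSet M (c (Fin.last l)) G)).toFinset)
    (fun p => f (Fin.snoc p.1 p.2))]
  refine Finset.sum_nbij'
    (fun c => (⟨Fin.init c, c (Fin.last (l + 1))⟩ :
      Σ _c : Fin (l + 1) → Set α, Set α))
    (fun p => Fin.snoc p.1 p.2) ?_ ?_ ?_ ?_ ?_
  · intro c hc
    rw [mem_chF] at hc
    obtain ⟨h1, h2⟩ := chain_trunc hc
    rw [Finset.mem_sigma, mem_chF]
    exact ⟨h1, by rw [Set.Finite.mem_toFinset]; exact h2⟩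
  · intro p hp
    rw [Finset.mem_sigma, mem_chF, Set.Finite.mem_toFinset] at hp
    rw [mem_chF]
    exact chain_snoc hp.1 hp.2
  · intro c _
    exact Fin.snoc_init_self c
  · intro p _
    refine Sigma.ext ?_ ?_ <;> simp [Fin.init_snoc, Fin.snoc_last]
  · intro c _
    rw [Fin.snoc_init_self]

lemma alg {V : Type*} [AddCommGroup V] [Module ℝ V] (C : ℕ → V) (n : ℕ) :
    C n + (∑ l ∈ Finset.Icc 1 n, ((-1 : ℝ) ^ (n + 1 - l)) • (C l + C (l - 1)))
      + ((-1 : ℝ) ^ (n + 1)) • C 0 = 0 := by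
  induction n with
  | zero => simp
  | succ n ih =>
    rw [Finset.sum_Icc_succ_top (by omega)]
    have hre : ∀ l ∈ Finset.Icc 1 n, ((-1 : ℝ) ^ (n + 1 + 1 - l)) • (C l + C (l - 1))
        = -(((-1 : ℝ) ^ (n + 1 - l)) • (C l + C (l - 1))) := by
      intro l hl
      rw [Finset.mem_Icc] at hl
      have he : n + 1 + 1 - l = (n + 1 - l) + 1 := by omega
      rw [he, pow_succ, mul_smul, neg_one_smul, smul_neg]
    rw [Finset.sum_congr rfl hre, Finset.sum_neg_distrib]
    have h1 : n + 1 + 1 - (n + 1) = 1 := by omega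
    rw [h1, pow_one, neg_one_smul]
    rw [show n + 1 + 1 = (n + 1) + 1 from rfl, pow_succ, mul_smul, neg_one_smul, smul_neg]
    have key : ∀ a b S t : V, a + S + t = 0 → b + (-S + -(b + a)) + -t = 0 := by
      intro a b S t h
      have h2 : b + (-S + -(b + a)) + -t = -(a + S + t) := by abel
      rw [h2, h, neg_zero]
    exact key _ _ _ _ ih

end BalanceAux

/-- The `(i,k)`-balancing condition (Theorem 3.1), for consecutive flats
`F = F_i ⊊ G = F_{i+1}` of a flag and `1 ≤ k ≤ rk G − rk F`:
`Σ_{F=F⁽⁰⁾⋖⋯⋖F⁽ᵏ⁾⊆G} (e_{F⁽ᵏ⁾} − e_{F⁽ᵏ⁻¹⁾})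
 + Σ_{l=1}^{k−1} (−1)^{k−l} Σ_{F=F⁽⁰⁾⋖⋯⋖F⁽ˡ⁾⊆G} (e_G − e_{F⁽ˡ⁻¹⁾})
 + (−1)^k (e_G − e_F) = 0`. -/
theorem higher_balancing {α : Type*} [Fintype α] (M : Matroid α) (hE : M.E = Set.univ)
    (F G : Set α) (hF : M.IsFlat F) (hG : M.IsFlat G) (hFG : F ⊂ G)
    (k : ℕ) (hk1 : 1 ≤ k) (hk2 : k ≤ mrk M G - mrk M F) :
    (∑ᶠ c ∈ {c : Fin (k + 1) → Set α | IsCovChain M F G k c},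
        (eVec (c (Fin.last k)) - eVec (c ⟨k - 1, by omega⟩)))
      + (∑ l ∈ Finset.Icc 1 (k - 1), ((-1 : ℝ) ^ (k - l)) •
          (∑ᶠ c ∈ {c : Fin (l + 1) → Set α | IsCovChain M F G l c},
            (eVec G - eVec (c ⟨l - 1, by omega⟩))))
      + ((-1 : ℝ) ^ k) • (eVec G - eVec F) = 0 := by
  classical
  obtain ⟨m, rfl⟩ : ∃ m, k = m + 1 := ⟨k - 1, by omega⟩
  have hlt : mrk M F < mrk M G := BalanceAux.mrk_lt_of_flat_ssubset hE hF hFG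
  have hmk : mrk M F + (m + 1) ≤ mrk M G := by omega
  -- Claim A : the (n+1)-chain sums collapse
  have hA : ∀ n : ℕ, n + 1 ≤ m + 1 →
      (∑ c ∈ BalanceAux.chF M F G (n + 1),
        (eVec (c (Fin.last (n + 1))) - eVec (c ((Fin.last n).castSucc))))
      = ∑ c ∈ BalanceAux.chF M F G n, (eVec G - eVec (c (Fin.last n))) := by
    intro n hn
    rw [BalanceAux.sum_chain_succ]
    refine Finset.sum_congr rfl ?_
    intro c hc
    rw [BalanceAux.mem_chF] at hc
    have hstep : ∀ F'' ∈ (Set.toFinite (BalanceAux.covSet M (c (Fin.last n)) G)).toFinset,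
        (eVec ((Fin.snoc c F'' : Fin (n + 1 + 1) → Set α) (Fin.last (n + 1))) -
          eVec ((Fin.snoc c F'' : Fin (n + 1 + 1) → Set α) ((Fin.last n).castSucc)))
          = eVec F'' - eVec (c (Fin.last n)) := by
      intro F'' _
      rw [Fin.snoc_last, Fin.snoc_castSucc]
    rw [Finset.sum_congr rfl hstep]
    have hlast := BalanceAux.chain_flat_mrk hE hF hc (Fin.last n)
    have hss : c (Fin.last n) ⊂ G := by
      refine (hc.2.2).ssubset_of_ne (fun hEq => ?_)
      have h2 := hlast.2
      rw [hEq] at h2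
      simp only [Fin.val_last] at h2
      omega
    exact BalanceAux.basic_balance hE hlast.1 hG hss
  -- chains of length 0
  have hC0 : (∑ c ∈ BalanceAux.chF M F G 0, (eVec G - eVec (c (Fin.last 0))))
      = eVec G - eVec F := by
    have hone : BalanceAux.chF M F G 0 = {fun _ => F} := by
      ext c
      rw [BalanceAux.mem_chF, Finset.mem_singleton]
      constructor
      · intro hc
        funext j
        have hj : j = 0 := Fin.ext (by have := j.isLt; omega)
        rw [hj]; exact hc.1
      · rintro rfl
        exact ⟨rfl, fun j => j.elim0, hFG.subset⟩
    rw [hone, Finset.sum_singleton]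
  -- Claim B
  have hBB : ∀ l ∈ Finset.Icc 1 m, ((-1 : ℝ) ^ (m + 1 - l)) •
      (∑ᶠ c ∈ {c : Fin (l + 1) → Set α | IsCovChain M F G l c},
        (eVec G - eVec (c ⟨l - 1, by omega⟩)))
      = ((-1 : ℝ) ^ (m + 1 - l)) •
        ((∑ c ∈ BalanceAux.chF M F G l, (eVec G - eVec (c (Fin.last l))))
          + (∑ c ∈ BalanceAux.chF M F G (l - 1),
              (eVec G - eVec (c (Fin.last (l - 1)))))) := by
    intro l hl
    rw [Finset.mem_Icc] at hl
    obtain ⟨n, rfl⟩ : ∃ n, l = n + 1 := ⟨l - 1, by omega⟩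
    show ((-1 : ℝ) ^ (m + 1 - (n + 1))) •
      (∑ᶠ c ∈ {c : Fin (n + 1 + 1) → Set α | IsCovChain M F G (n + 1) c},
        (eVec G - eVec (c ((Fin.last n).castSucc))))
      = ((-1 : ℝ) ^ (m + 1 - (n + 1))) •
        ((∑ c ∈ BalanceAux.chF M F G (n + 1), (eVec G - eVec (c (Fin.last (n + 1)))))
          + (∑ c ∈ BalanceAux.chF M F G n, (eVec G - eVec (c (Fin.last n)))))
    congr 1
    rw [BalanceAux.finsum_chain_eq]
    have hsplit : ∀ c ∈ BalanceAux.chF M F G (n + 1),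
        eVec G - eVec (c ((Fin.last n).castSucc))
        = (eVec G - eVec (c (Fin.last (n + 1)))) +
          (eVec (c (Fin.last (n + 1))) - eVec (c ((Fin.last n).castSucc))) := by
      intro c _
      abel
    rw [Finset.sum_congr rfl hsplit, Finset.sum_add_distrib, hA n (by omega)]
  -- assemble
  rw [BalanceAux.finsum_chain_eq]
  simp only [Nat.add_sub_cancel]
  have hidx1 : (⟨m, by omega⟩ : Fin (m + 1 + 1)) = (Fin.last m).castSucc := rfl
  simp only [hidx1]
  rw [hA m le_rfl, Finset.sum_congr rfl hBB, ← hC0]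
  exact BalanceAux.alg
    (fun l => ∑ c ∈ BalanceAux.chF M F G l, (eVec G - eVec (c (Fin.last l)))) m
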